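/- Let A ∈ ℝ^{m×n} have full column rank n, b ∈ ℝ^m, c ∈ ℝⁿ, x = (AᵀA)⁻¹(Aᵀb + c), r = b − Ax, A† = (AᵀA)⁻¹Aᵀ. Let vec: ℝ^{m×n} → ℝ^{mn} be the operator stacking the columns of a matrix (so that vec(PXQ) = (Qᵀ⊗P)vec(X)), and let L_T ∈ ℝ^{nm×mn} be the permutation matrix such that vec(Eᵀ) = L_T vec(E) for all E ∈ ℝ^{m×n}. Define the n×(mn+m+n) block matrix M = [(rᵀ⊗(AᵀA)⁻¹)L_T − xᵀ⊗A†, A†, (AᵀA)⁻¹], whose first block represents the map E ↦ (AᵀA)⁻¹Eᵀr − A†Ex. Then M Mᵀ = M̄, where M̄ = (1 + ‖r‖²)(AᵀA)⁻² + (1 + ‖x‖²)(AᵀA)⁻¹ − 2 sym(B), B = A† r xᵀ (AᵀA)⁻¹ and sym(B) = (B + Bᵀ)/2; consequently the spectral norm of M equals sqrt(‖M̄‖). -/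

import Mathlib

open Matrix
open scoped Matrix.Norms.L2Operator

/-- Euclidean norm of a vector. -/
noncomputable def euclNorm {k : Type*} [Fintype k] (v : k → ℝ) : ℝ :=
  Real.sqrt (∑ i, v i ^ 2)

/-- Spectral (Euclidean operator) norm of a matrix, as the supremum of
`‖M y‖ / ‖y‖` over nonzero `y`. -/
noncomputable def specNorm {k l : Type*} [Fintype k] [Fintype l]
    (M : Matrix k l ℝ) : ℝ :=
  sSup {t : ℝ | ∃ y : l → ℝ, y ≠ 0 ∧ t = euclNorm (M *ᵥ y) / euclNorm y}

/-- The column-stacking operator `vec : ℝ^{m×n} → ℝ^{mn}`: the vector of a matrix `E`,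
indexed by pairs `(column, row)`, so that `vec(PXQ) = (Qᵀ ⊗ P) vec(X)` for the Kronecker
product indexed accordingly. -/
def vecC {m n : ℕ} (E : Matrix (Fin m) (Fin n) ℝ) : Fin n × Fin m → ℝ :=
  fun p => E p.2 p.1

/-- Lemma 3.2 and Theorem 3.3: matrix form of the structured condition
number. Let `L_T` be the permutation (commutation) matrix with `vec(Eᵀ) = L_T vec(E)` for
all `E`, and let `M = [(rᵀ⊗(AᵀA)⁻¹)L_T − xᵀ⊗A†, A†, (AᵀA)⁻¹]`, whose first block represents
the map `E ↦ (AᵀA)⁻¹Eᵀr − A†Ex` (here `rᵀ⊗(AᵀA)⁻¹` and `xᵀ⊗A†` are the Kronecker products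
with the row vectors `rᵀ`, `xᵀ`, with the trivial index collapsed). Then `M Mᵀ = M̄`, where
`M̄ = (1 + ‖r‖²)(AᵀA)⁻² + (1 + ‖x‖²)(AᵀA)⁻¹ − 2 sym(B)` with `B = A† r xᵀ (AᵀA)⁻¹`;
consequently the spectral norm of `M` equals `sqrt(‖M̄‖)`. -/

lemma myEuclNormSq {k : Type*} [Fintype k] (v : k → ℝ) :
    euclNorm v ^ 2 = ∑ i, v i ^ 2 :=
  Real.sq_sqrt (Finset.sum_nonneg fun i _ => sq_nonneg _)

lemma euclNorm_eq_norm {k : Type*} [Fintype k] (v : k → ℝ) :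
    euclNorm v = ‖(EuclideanSpace.equiv k ℝ).symm v‖ := by
  rw [EuclideanSpace.norm_eq, euclNorm]
  congr 1
  exact Finset.sum_congr rfl fun i _ => by
    rw [Real.norm_eq_abs, sq_abs]; rfl

lemma specNorm_eq_l2 {k l : Type*} [Fintype k] [Fintype l] [DecidableEq l] [Nonempty l]
    (M : Matrix k l ℝ) : specNorm M = ‖M‖ := by
  set T := (Matrix.toEuclideanLin (𝕜 := ℝ) (m := k) (n := l)).trans
      LinearMap.toContinuousLinearMap M with hT
  have hnorm : ‖M‖ = ‖T‖ := rfl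
  have happ : ∀ y : l → ℝ, T ((EuclideanSpace.equiv l ℝ).symm y)
      = (EuclideanSpace.equiv k ℝ).symm (M *ᵥ y) := fun y => rfl
  have hSne : ∃ t, t ∈ {t : ℝ | ∃ y : l → ℝ, y ≠ 0 ∧ t = euclNorm (M *ᵥ y) / euclNorm y} := by
    refine ⟨_, (fun _ => 1), ?_, rfl⟩
    intro h
    exact one_ne_zero (congrFun h (Classical.arbitrary l))
  have hub : ∀ t ∈ {t : ℝ | ∃ y : l → ℝ, y ≠ 0 ∧ t = euclNorm (M *ᵥ y) / euclNorm y},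
      t ≤ ‖T‖ := by
    rintro t ⟨y, hy, rfl⟩
    have hy' : (EuclideanSpace.equiv l ℝ).symm y ≠ 0 := by
      simpa using hy
    have hpos : 0 < ‖(EuclideanSpace.equiv l ℝ).symm y‖ := norm_pos_iff.mpr hy'
    rw [euclNorm_eq_norm, euclNorm_eq_norm]
    rw [div_le_iff₀ hpos]
    rw [← happ]
    exact T.le_opNorm ((EuclideanSpace.equiv l ℝ).symm y)
  rw [hnorm, specNorm]
  apply le_antisymm
  · exact csSup_le (Set.nonempty_def.mpr hSne) hub
  · apply ContinuousLinearMap.opNorm_le_bound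
    · obtain ⟨t, ht⟩ := hSne
      refine le_trans ?_ (le_csSup ⟨‖T‖, hub⟩ ht)
      obtain ⟨y, hy, rfl⟩ := ht
      unfold euclNorm
      positivity
    · intro z
      rcases eq_or_ne z 0 with rfl | hz
      · simp
      · set y : l → ℝ := (EuclideanSpace.equiv l ℝ) z with hy
        have hyne : y ≠ 0 := by
          intro h
          apply hz
          have := congrArg (EuclideanSpace.equiv l ℝ).symm h
          simpa [hy] using this
        have hmem : euclNorm (M *ᵥ y) / euclNorm y ∈
            {t : ℝ | ∃ y : l → ℝ, y ≠ 0 ∧ t = euclNorm (M *ᵥ y) / euclNorm y} :=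
          ⟨y, hyne, rfl⟩
        have hle := le_csSup ⟨‖T‖, hub⟩ hmem
        have hzy : (EuclideanSpace.equiv l ℝ).symm y = z := rfl
        have hpos : 0 < euclNorm y := by
          rw [euclNorm_eq_norm, hzy]; exact norm_pos_iff.mpr hz
        have hez : euclNorm y = ‖z‖ := by rw [euclNorm_eq_norm, hzy]
        have hTz : ‖T z‖ = euclNorm (M *ᵥ y) := by
          rw [← hzy, happ, ← euclNorm_eq_norm]
        rw [hTz, ← hez]
        calc euclNorm (M *ᵥ y)
            = euclNorm (M *ᵥ y) / euclNorm y * euclNorm y :=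
              (div_mul_cancel₀ _ hpos.ne').symm
          _ ≤ _ * euclNorm y := mul_le_mul_of_nonneg_right hle hpos.le

lemma DDt_eq {m n : ℕ} (S : Matrix (Fin n) (Fin n) ℝ) (Adag : Matrix (Fin n) (Fin m) ℝ)
    (r : Fin m → ℝ) (x : Fin n → ℝ)
    (hSsym : Sᵀ = S) (hAA : Adag * Adagᵀ = S) :
    (Matrix.of fun i (q : Fin n × Fin m) => r q.2 * S i q.1 - x q.1 * Adag i q.2) *
      (Matrix.of fun i (q : Fin n × Fin m) => r q.2 * S i q.1 - x q.1 * Adag i q.2)ᵀ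
    = (∑ e, r e ^ 2) • (S * S) + (∑ a, x a ^ 2) • S
        - (Adag * vecMulVec r x * S) - (Adag * vecMulVec r x * S)ᵀ := by
  ext i j
  have hS : ∀ a b, S a b = S b a := fun a b => by
    nth_rewrite 1 [← hSsym]
    rw [Matrix.transpose_apply]
  simp only [Matrix.mul_apply, Matrix.transpose_apply, Matrix.of_apply,
    Matrix.add_apply, Matrix.sub_apply, Matrix.smul_apply, smul_eq_mul,
    Matrix.vecMulVec_apply]
  rw [Fintype.sum_prod_type]
  have h1 : (∑ e, r e ^ 2) * (∑ k, S i k * S k j)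
      = ∑ a, ∑ e, S i a * S a j * r e ^ 2 := by
    rw [Finset.sum_mul_sum]; rw [Finset.sum_comm]
    exact Finset.sum_congr rfl fun a _ => Finset.sum_congr rfl fun e _ => by ring
  have h2 : (∑ a, x a ^ 2) * S i j = ∑ a, ∑ e, Adag i e * Adag j e * x a ^ 2 := by
    rw [← hAA, Matrix.mul_apply]
    simp only [Matrix.transpose_apply]
    rw [Finset.sum_mul_sum]
    exact Finset.sum_congr rfl fun a _ => Finset.sum_congr rfl fun e _ => by ring
  rw [h1, h2]
  simp only [Finset.sum_mul]
  simp only [← Finset.sum_add_distrib, ← Finset.sum_sub_distrib]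
  refine Finset.sum_congr rfl fun a _ => Finset.sum_congr rfl fun e _ => ?_
  rw [hS a j, hS a i]
  ring

theorem stmt16 {m n : ℕ} (hn : 0 < n) (hmn : n ≤ m)
    (A : Matrix (Fin m) (Fin n) ℝ) (hA : A.rank = n)
    (b : Fin m → ℝ) (c : Fin n → ℝ)
    (x : Fin n → ℝ) (hx : x = (Aᵀ * A)⁻¹ *ᵥ (Aᵀ *ᵥ b + c))
    (r : Fin m → ℝ) (hr : r = b - A *ᵥ x)
    (LT : Matrix (Fin m × Fin n) (Fin n × Fin m) ℝ)
    (hLTperm : ∀ p q, LT p q = if p.1 = q.2 ∧ p.2 = q.1 then 1 else 0)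
    (hLT : ∀ E : Matrix (Fin m) (Fin n) ℝ, LT *ᵥ vecC E = vecC Eᵀ)
    (K₁ : Matrix (Fin n) (Fin m × Fin n) ℝ)
    (hK₁ : K₁ = Matrix.of fun i p => r p.1 * (Aᵀ * A)⁻¹ i p.2)
    (K₂ : Matrix (Fin n) (Fin n × Fin m) ℝ)
    (hK₂ : K₂ = Matrix.of fun i p => x p.1 * ((Aᵀ * A)⁻¹ * Aᵀ) i p.2)
    (M : Matrix (Fin n) ((Fin n × Fin m) ⊕ (Fin m ⊕ Fin n)) ℝ)
    (hMblocks : M = Matrix.of fun i q =>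
      Sum.elim (fun p => (K₁ * LT - K₂) i p)
        (Sum.elim (fun j => ((Aᵀ * A)⁻¹ * Aᵀ) i j) (fun j => (Aᵀ * A)⁻¹ i j)) q)
    (hMmap : ∀ (E : Matrix (Fin m) (Fin n) ℝ) (f : Fin m → ℝ) (g : Fin n → ℝ),
      M *ᵥ Sum.elim (vecC E) (Sum.elim f g) =
        (Aᵀ * A)⁻¹ *ᵥ (Eᵀ *ᵥ r) - ((Aᵀ * A)⁻¹ * Aᵀ) *ᵥ (E *ᵥ x)
          + ((Aᵀ * A)⁻¹ * Aᵀ) *ᵥ f + (Aᵀ * A)⁻¹ *ᵥ g)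
    (B : Matrix (Fin n) (Fin n) ℝ)
    (hB : B = ((Aᵀ * A)⁻¹ * Aᵀ) * vecMulVec r x * (Aᵀ * A)⁻¹)
    (Mbar : Matrix (Fin n) (Fin n) ℝ)
    (hMbar : Mbar = (1 + euclNorm r ^ 2) • ((Aᵀ * A)⁻¹ * (Aᵀ * A)⁻¹)
        + (1 + euclNorm x ^ 2) • (Aᵀ * A)⁻¹
        - (2 : ℝ) • ((1 / 2 : ℝ) • (B + Bᵀ))) :
    M * Mᵀ = Mbar ∧ specNorm M = Real.sqrt (specNorm Mbar) := by
  -- basic invertibility facts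
  set S := (Aᵀ * A)⁻¹ with hSdef
  set Adag := (Aᵀ * A)⁻¹ * Aᵀ with hAdagdef
  have hU : IsUnit (Aᵀ * A) := by
    have h1 : (Aᵀ * A).rank = n := by rw [Matrix.rank_transpose_mul_self, hA]
    rw [← Matrix.mulVec_surjective_iff_isUnit]
    have htop : LinearMap.range (Aᵀ * A).mulVecLin = ⊤ := by
      apply Submodule.eq_top_of_finrank_eq
      rw [← Matrix.rank]; simp [h1]
    intro v
    exact (LinearMap.range_eq_top.mp htop) v
  have hdet : IsUnit (Aᵀ * A).det := (Matrix.isUnit_iff_isUnit_det _).mp hU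
  have hSmul : (Aᵀ * A) * S = 1 := Matrix.mul_nonsing_inv _ hdet
  have hmulS : S * (Aᵀ * A) = 1 := Matrix.nonsing_inv_mul _ hdet
  have hSsym : Sᵀ = S := by
    rw [hSdef, Matrix.transpose_nonsing_inv, Matrix.transpose_mul,
      Matrix.transpose_transpose]
  have hAdagT : Adagᵀ = A * S := by
    rw [hAdagdef, Matrix.transpose_mul, Matrix.transpose_transpose, hSsym]
  have hAA : Adag * Adagᵀ = S := by
    rw [hAdagT, hAdagdef]
    calc S * Aᵀ * (A * S) = S * ((Aᵀ * A) * S) := by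
          rw [Matrix.mul_assoc, Matrix.mul_assoc]
      _ = S := by rw [hSmul, Matrix.mul_one]
  -- the first block
  have hD : K₁ * LT - K₂
      = Matrix.of fun i (q : Fin n × Fin m) => r q.2 * S i q.1 - x q.1 * Adag i q.2 := by
    ext i q
    obtain ⟨a, e⟩ := q
    simp only [Matrix.sub_apply, Matrix.mul_apply, hK₁, hK₂, Matrix.of_apply, hLTperm]
    congr 1
    have hcond : ∀ p : Fin m × Fin n, (p.1 = e ∧ p.2 = a) = (p = (e, a)) := by
      intro p; simp [Prod.ext_iff]
    simp only [hcond, mul_ite, mul_one, mul_zero]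
    rw [Finset.sum_ite_eq' Finset.univ (e, a)]
    simp
  -- block decomposition of M
  have hM' : M = Matrix.fromCols (K₁ * LT - K₂) (Matrix.fromCols Adag S) := by
    rw [hMblocks]
    ext i q
    cases q with
    | inl p => rfl
    | inr p => cases p with
      | inl j => rfl
      | inr j => rfl
  have hMMt : M * Mᵀ = (K₁ * LT - K₂) * (K₁ * LT - K₂)ᵀ + (Adag * Adagᵀ + S * Sᵀ) := by
    rw [hM', Matrix.transpose_fromCols, Matrix.fromCols_mul_fromRows,
      Matrix.transpose_fromCols, Matrix.fromCols_mul_fromRows]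
  have hBB : B = Adag * vecMulVec r x * S := by rw [hB]
  have key : M * Mᵀ = Mbar := by
    rw [hMMt, hD, DDt_eq S Adag r x hSsym hAA, hMbar, ← hBB, hAA, hSsym,
      ← myEuclNormSq r, ← myEuclNormSq x]
    have h2 : (2 : ℝ) • ((1 / 2 : ℝ) • (B + Bᵀ)) = B + Bᵀ := by
      rw [smul_smul]; norm_num
    rw [h2]
    module
  refine ⟨key, ?_⟩
  haveI : Nonempty (Fin n) := ⟨⟨0, hn⟩⟩
  haveI : Nonempty ((Fin n × Fin m) ⊕ (Fin m ⊕ Fin n)) :=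
    ⟨Sum.inl (⟨0, hn⟩, ⟨0, lt_of_lt_of_le hn hmn⟩)⟩
  rw [specNorm_eq_l2 M, specNorm_eq_l2 Mbar, ← key]
  have hMt : (Mᵀ)ᴴ = M := by
    rw [Matrix.conjTranspose_eq_transpose_of_trivial, Matrix.transpose_transpose]
  have hnn : ‖M * Mᵀ‖ = ‖M‖ * ‖M‖ := by
    have h3 : ‖Mᵀ‖ = ‖M‖ := by
      rw [← Matrix.conjTranspose_eq_transpose_of_trivial]
      exact Matrix.l2_opNorm_conjTranspose M
    calc ‖M * Mᵀ‖ = ‖(Mᵀ)ᴴ * Mᵀ‖ := by rw [hMt]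
      _ = ‖Mᵀ‖ * ‖Mᵀ‖ := Matrix.l2_opNorm_conjTranspose_mul_self _
      _ = ‖M‖ * ‖M‖ := by rw [h3]
  rw [hnn, Real.sqrt_mul_self (norm_nonneg _)]
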